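/- arXiv:0910.2798 — 2 statements merged into one kernel-verified Lean document; each statement's English description precedes it below -/
import Mathlib

section
/- The limsup as n → ∞ of (log τ^{(e)*}(n) · log log n) / log n equals (1/2) log 2. -/
open scoped Classical BigOperators

/-- `d` is a unitary divisor of `m`: `d ∣ m` and `gcd (d, m/d) = 1`. -/
def IsUnitaryDivisor (d m : ℕ) : Prop := d ∣ m ∧ Nat.gcd d (m / d) = 1

/-- `ω m` is the number of distinct prime divisors of `m`. -/
def omega (m : ℕ) : ℕ := m.primeFactors.card

/-- `d` is an exponential unitary divisor of `n`: `d` has the same prime factors as `n`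
and, at each such prime, the exponent of `d` is a unitary divisor of the exponent of `n`.
By convention `1` is the only e-unitary divisor of `1`. -/
def IsExpUnitaryDivisor (d n : ℕ) : Prop :=
  0 < d ∧ 0 < n ∧ d.primeFactors = n.primeFactors ∧
    ∀ p ∈ n.primeFactors, IsUnitaryDivisor (d.factorization p) (n.factorization p)

/-- `d` is an exponential divisor of `n`. -/
def IsExpDivisor (d n : ℕ) : Prop :=
  0 < d ∧ 0 < n ∧ d.primeFactors = n.primeFactors ∧
    ∀ p ∈ n.primeFactors, d.factorization p ∣ n.factorization p

/-- the sum of the e-unitary divisors of `n` -/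
noncomputable def sigmaEStar (n : ℕ) : ℕ :=
  ∑ d ∈ n.divisors.filter (fun d => IsExpUnitaryDivisor d n), d

/-- the number of the e-unitary divisors of `n` -/
noncomputable def tauEStar (n : ℕ) : ℕ :=
  (n.divisors.filter (fun d => IsExpUnitaryDivisor d n)).card

/-- the sum of the e-divisors of `n` -/
noncomputable def sigmaE (n : ℕ) : ℕ :=
  ∑ d ∈ n.divisors.filter (fun d => IsExpDivisor d n), d

/-- the number of the e-divisors of `n` -/
noncomputable def tauE (n : ℕ) : ℕ :=
  (n.divisors.filter (fun d => IsExpDivisor d n)).card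

/-- the number of unitary divisors of `m` -/
noncomputable def tauStar (m : ℕ) : ℕ :=
  (m.divisors.filter (fun d => IsUnitaryDivisor d m)).card

/-- the unitary analogue `φ*` of Euler's function: multiplicative with `φ*(p^a) = p^a - 1` -/
def phiStar (m : ℕ) : ℕ := ∏ p ∈ m.primeFactors, (p ^ m.factorization p - 1)

/-- the e-unitary Euler function `φ^{(e)*}` -/
def phiEStar (n : ℕ) : ℕ := ∏ p ∈ n.primeFactors, phiStar (n.factorization p)

/-- the exponential Euler function `φ^{(e)}` -/
def phiE (n : ℕ) : ℕ := ∏ p ∈ n.primeFactors, Nat.totient (n.factorization p)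

/-- the exponential unitary analogue of the Möbius function -/
def muEStar (n : ℕ) : ℤ := (-1) ^ (∑ p ∈ n.primeFactors, omega (n.factorization p))


section AuxProof

open Filter


section Generic

lemma limsup_eq_of_aux (f : ℕ → ℝ) (c : ℝ)
    (hub : ∀ ε > 0, ∀ᶠ n in atTop, f n ≤ c + ε)
    (hlb : ∀ ε > 0, ∃ᶠ n in atTop, c - ε ≤ f n) :
    Filter.limsup f Filter.atTop = c := by
  have hbd : ∀ a ∈ {a : ℝ | ∀ᶠ n in atTop, f n ≤ a}, c - 1 ≤ a := by
    intro a ha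
    obtain ⟨n, h1, h2⟩ := ((hlb 1 one_pos).and_eventually ha).exists
    exact h1.trans h2
  rw [Filter.limsup_eq]
  apply le_antisymm
  · apply le_of_forall_pos_le_add
    intro ε hε
    exact csInf_le ⟨c - 1, hbd⟩ (hub ε hε)
  · apply le_csInf ⟨c + 1, hub 1 one_pos⟩
    intro a ha
    apply le_of_forall_pos_le_add
    intro ε hε
    obtain ⟨n, h1, h2⟩ := ((hlb ε hε).and_eventually ha).exists
    linarith

end Generic

section Counting

lemma tauEStar_le_prod (n : ℕ) :
    tauEStar n ≤ ∏ p ∈ n.primeFactors, (n.factorization p).divisors.card := by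
  rw [tauEStar, ← Finset.card_pi]
  apply Finset.card_le_card_of_injOn (fun d => fun p _ => d.factorization p)
  · intro d hd
    simp only [Finset.mem_coe, Finset.mem_filter] at hd
    obtain ⟨-, h⟩ := hd
    rw [Finset.mem_coe, Finset.mem_pi]
    intro p hp
    rw [Nat.mem_divisors]
    refine ⟨(h.2.2.2 p hp).1, ?_⟩
    have := Nat.support_factorization n ▸ hp
    exact Finsupp.mem_support_iff.mp this
  · intro d1 h1 d2 h2 heq
    simp only [Finset.coe_filter, Set.mem_setOf_eq] at h1 h2
    have e1 : d1.primeFactors = n.primeFactors := h1.2.2.2.1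
    have e2 : d2.primeFactors = n.primeFactors := h2.2.2.2.1
    apply Nat.factorization_inj (Set.mem_setOf_eq ▸ h1.2.1.ne')
      (Set.mem_setOf_eq ▸ h2.2.1.ne')
    ext p
    by_cases hp : p ∈ n.primeFactors
    · exact congrFun (congrFun heq p) hp
    · have z1 : p ∉ d1.primeFactors := e1 ▸ hp
      have z2 : p ∉ d2.primeFactors := e2 ▸ hp
      rw [← Nat.support_factorization] at z1 z2
      rw [Finsupp.notMem_support_iff.mp z1, Finsupp.notMem_support_iff.mp z2]

lemma aux_sq_le_two_pow : ∀ a : ℕ, 6 ≤ a → (a + 1) ^ 2 ≤ 2 ^ a := by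
  intro a ha
  induction a, ha using Nat.le_induction with
  | base => norm_num
  | succ a ha ih =>
    have h2 : (a + 1 + 1) ^ 2 ≤ 2 * (a + 1) ^ 2 := by nlinarith
    calc (a + 1 + 1) ^ 2 ≤ 2 * (a + 1) ^ 2 := h2
    _ ≤ 2 * 2 ^ a := by omega
    _ = 2 ^ (a + 1) := by ring

lemma card_divisors_le_succ (a : ℕ) : a.divisors.card ≤ a + 1 := by
  calc a.divisors.card ≤ (Finset.range (a + 1)).card := by
        apply Finset.card_le_card
        intro d hd
        simp only [Finset.mem_range]
        exact Nat.lt_succ_of_le (Nat.divisor_le hd)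
  _ = a + 1 := Finset.card_range _

lemma sq_card_divisors_le (a : ℕ) : a.divisors.card ^ 2 ≤ 2 ^ a := by
  rcases le_or_gt 6 a with h | h
  · calc a.divisors.card ^ 2 ≤ (a + 1) ^ 2 :=
        Nat.pow_le_pow_left (card_divisors_le_succ a) 2
    _ ≤ 2 ^ a := aux_sq_le_two_pow a h
  · interval_cases a <;> decide

lemma log_card_divisors_le_half (a : ℕ) :
    Real.log a.divisors.card ≤ (a : ℝ) / 2 * Real.log 2 := by
  rcases Nat.eq_zero_or_pos a.divisors.card with h | h
  · rw [h]
    simp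
    positivity
  · have h1 : (0 : ℝ) < a.divisors.card := by exact_mod_cast h
    have h2 : ((a.divisors.card : ℝ)) ^ 2 ≤ (2 : ℝ) ^ a := by
      exact_mod_cast sq_card_divisors_le a
    have := Real.log_le_log (by positivity) h2
    rw [Real.log_pow, Real.log_pow] at this
    push_cast at this ⊢
    linarith

lemma log_nat_le_log_nat {a b : ℕ} (h : a ≤ b) : Real.log a ≤ Real.log b := by
  rcases Nat.eq_zero_or_pos a with h0 | h0
  · rw [h0]; simpa using Real.log_natCast_nonneg b
  · exact Real.log_le_log (by exact_mod_cast h0) (by exact_mod_cast h)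

lemma log_eq_sum (n : ℕ) (hn : n ≠ 0) :
    Real.log n = ∑ p ∈ n.primeFactors, (n.factorization p : ℝ) * Real.log p := by
  conv_lhs => rw [← Nat.factorization_prod_pow_eq_self hn]
  rw [Finsupp.prod]
  rw [Nat.support_factorization]
  push_cast
  rw [Real.log_prod]
  · apply Finset.sum_congr rfl
    intro p hp
    rw [Real.log_pow]
  · intro p hp
    have hp2 := Nat.prime_of_mem_primeFactors hp
    have : (0:ℝ) < (p:ℝ) ^ n.factorization p := by
      have : 0 < p := hp2.pos
      positivity
    exact this.ne'

lemma log_le_sum_log {n : ℕ} {s : Finset ℕ} {g : ℕ → ℕ} (h : n ≤ ∏ p ∈ s, g p) :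
    Real.log n ≤ ∑ p ∈ s, Real.log (g p) := by
  rcases Nat.eq_zero_or_pos n with h0 | h0
  · rw [h0]
    simp only [Nat.cast_zero, Real.log_zero]
    apply Finset.sum_nonneg
    intro p _
    exact Real.log_natCast_nonneg _
  · have hprod : 0 < ∏ p ∈ s, g p := lt_of_lt_of_le h0 h
    have hall : ∀ p ∈ s, g p ≠ 0 := by
      intro p hp
      exact Nat.pos_of_ne_zero (fun hz => by simp [Finset.prod_eq_zero hp hz] at hprod) |>.ne'
    calc Real.log n ≤ Real.log ((∏ p ∈ s, g p : ℕ)) := log_nat_le_log_nat h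
    _ = ∑ p ∈ s, Real.log (g p) := by
        rw [Nat.cast_prod]
        exact Real.log_prod (fun p hp => by
          exact_mod_cast (Nat.pos_of_ne_zero (hall p hp)).ne')

end Counting

section Upper

lemma ev_cond (ε δ : ℝ) (hε : 0 < ε) (hδ : 0 < δ) :
    ∀ᶠ x : ℝ in atTop,
      4 * Real.exp ((1 - δ) * Real.log x) * (Real.log x) ^ 2 ≤ ε / 2 * x := by
  have hc : (0 : ℝ) < Real.sqrt (ε / 8) := Real.sqrt_pos.mpr (by linarith)
  have h := (isLittleO_log_rpow_atTop (half_pos hδ)).def hc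
  filter_upwards [h, eventually_ge_atTop 1] with x hx hx1
  have hx0 : (0 : ℝ) < x := by linarith
  have hlog0 : 0 ≤ Real.log x := Real.log_nonneg hx1
  have hrpow0 : (0 : ℝ) ≤ x ^ (δ / 2) := (Real.rpow_pos_of_pos hx0 _).le
  rw [Real.norm_eq_abs, Real.norm_eq_abs, abs_of_nonneg hlog0, abs_of_nonneg hrpow0] at hx
  have hsq : (Real.log x) ^ 2 ≤ ε / 8 * x ^ δ := by
    have h2 : (Real.log x) ^ 2 ≤ (Real.sqrt (ε / 8) * x ^ (δ / 2)) ^ 2 :=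
      pow_le_pow_left₀ hlog0 hx 2
    calc (Real.log x) ^ 2 ≤ (Real.sqrt (ε / 8) * x ^ (δ / 2)) ^ 2 := h2
    _ = (Real.sqrt (ε / 8)) ^ 2 * (x ^ (δ / 2) * x ^ (δ / 2)) := by ring
    _ = ε / 8 * x ^ δ := by
        rw [Real.sq_sqrt (by linarith : (0:ℝ) ≤ ε / 8), ← Real.rpow_add hx0]
        norm_num
  have hexp : Real.exp ((1 - δ) * Real.log x) = x ^ (1 - δ) := by
    rw [Real.rpow_def_of_pos hx0, mul_comm]
  rw [hexp]
  calc 4 * x ^ (1 - δ) * (Real.log x) ^ 2 ≤ 4 * x ^ (1 - δ) * (ε / 8 * x ^ δ) := by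
        apply mul_le_mul_of_nonneg_left hsq (by positivity)
  _ = ε / 2 * (x ^ (1 - δ) * x ^ δ) := by ring
  _ = ε / 2 * x := by rw [← Real.rpow_add hx0]; norm_num

set_option maxHeartbeats 2000000 in
lemma upper_bound (ε : ℝ) (hε : 0 < ε) :
    ∀ᶠ n : ℕ in atTop,
      Real.log (tauEStar n) * Real.log (Real.log n) / Real.log n
        ≤ 1 / 2 * Real.log 2 + ε := by
  have hlog2 : 0 < Real.log 2 := Real.log_pos one_lt_two
  set δ := min (1/2 : ℝ) (ε / (2 * Real.log 2)) with hδdef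
  have hδpos : 0 < δ := lt_min (by norm_num) (by positivity)
  have hδhalf : δ ≤ 1/2 := min_le_left _ _
  have hδε : δ ≤ ε / (2 * Real.log 2) := min_le_right _ _
  have hev : ∀ᶠ x : ℝ in atTop,
      (4 * Real.exp ((1 - δ) * Real.log x) * (Real.log x) ^ 2 ≤ ε / 2 * x)
      ∧ (3:ℝ) ≤ x ∧ 1 ≤ Real.log x :=
    (ev_cond ε δ hε hδpos).and ((eventually_ge_atTop 3).and
      (Real.tendsto_log_atTop.eventually_ge_atTop 1))
  have htL : Tendsto (fun n : ℕ => Real.log n) atTop atTop :=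
    Real.tendsto_log_atTop.comp tendsto_natCast_atTop_atTop
  filter_upwards [htL.eventually hev, eventually_ge_atTop 2] with n hn hn2
  obtain ⟨hC3, hL3, hLL1⟩ := hn
  set L := Real.log (n : ℝ) with hLdef
  set LL := Real.log L with hLLdef
  set P := n.primeFactors with hP
  set A : ℕ → ℕ := fun p => n.factorization p with hA
  have hn0 : n ≠ 0 := by omega
  have hLpos : 0 < L := by linarith
  have hLLpos : 0 < LL := by linarith
  set z := Real.exp ((1 - δ) * LL) with hz
  have hzpos : 0 < z := Real.exp_pos _
  have hz1 : 1 ≤ z := Real.one_le_exp (by nlinarith)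
  have hLsum : L = ∑ p ∈ P, (A p : ℝ) * Real.log p := log_eq_sum n hn0
  have hlogsum : Real.log (tauEStar n) ≤ ∑ p ∈ P, Real.log ((A p).divisors.card) :=
    log_le_sum_log (tauEStar_le_prod n)
  have htermnn : ∀ p ∈ P, 0 ≤ (A p : ℝ) * Real.log p := fun p _ =>
    mul_nonneg (Nat.cast_nonneg _) (Real.log_natCast_nonneg _)
  rw [← Finset.sum_filter_add_sum_filter_not P (fun p : ℕ => (p:ℝ) ≤ z)] at hlogsum
  set Ps := P.filter (fun p : ℕ => (p:ℝ) ≤ z) with hPs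
  set Pb := P.filter (fun p : ℕ => ¬((p:ℝ) ≤ z)) with hPb
  -- card of small primes
  have hcard : (Ps.card : ℝ) ≤ 2 * z := by
    have hsub : Ps ⊆ Finset.range (⌊z⌋₊ + 1) := by
      intro p hp
      rw [Finset.mem_range, Nat.lt_succ_iff]
      exact Nat.le_floor (Finset.mem_filter.mp hp).2
    have h1 := Finset.card_le_card hsub
    rw [Finset.card_range] at h1
    have h2 : (Ps.card : ℝ) ≤ (⌊z⌋₊ : ℝ) + 1 := by exact_mod_cast h1
    have h3 : (⌊z⌋₊ : ℝ) ≤ z := Nat.floor_le hzpos.le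
    linarith
  -- exponents bounded
  have hA2L : ∀ p ∈ P, (A p : ℝ) ≤ 2 * L := by
    intro p hp
    have h1 : (A p : ℝ) * Real.log p ≤ L := by
      rw [hLsum]
      exact Finset.single_le_sum htermnn hp
    have hp2 : 2 ≤ p := (Nat.prime_of_mem_primeFactors hp).two_le
    have hlp : Real.log 2 ≤ Real.log p :=
      Real.log_le_log (by norm_num) (by exact_mod_cast hp2)
    have h2 : (1/2 : ℝ) ≤ Real.log p := by
      have := Real.log_two_gt_d9
      linarith
    nlinarith [Nat.cast_nonneg (α := ℝ) (A p)]
  -- small terms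
  have hsmallterm : ∀ p ∈ Ps, Real.log ((A p).divisors.card) ≤ 2 * LL := by
    intro p hp
    have hpP : p ∈ P := (Finset.mem_filter.mp hp).1
    have c1 : Real.log ((A p).divisors.card) ≤ Real.log ((A p + 1 : ℕ)) :=
      log_nat_le_log_nat (card_divisors_le_succ _)
    have c2 : Real.log ((A p + 1 : ℕ)) ≤ Real.log (3 * L) := by
      apply Real.log_le_log (by positivity)
      push_cast
      have := hA2L p hpP
      linarith
    have c3 : Real.log (3 * L) ≤ 2 * LL := by
      have h3 : (3:ℝ) * L ≤ L * L := by nlinarith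
      have h4 := Real.log_le_log (by positivity) h3
      rw [Real.log_mul hLpos.ne' hLpos.ne'] at h4
      rw [hLLdef]
      linarith
    linarith
  have hsmall : ∑ p ∈ Ps, Real.log ((A p).divisors.card) ≤ 2 * z * (2 * LL) := by
    calc ∑ p ∈ Ps, Real.log ((A p).divisors.card)
        ≤ Ps.card • (2 * LL) := Finset.sum_le_card_nsmul _ _ _ hsmallterm
    _ = (Ps.card : ℝ) * (2 * LL) := nsmul_eq_mul _ _
    _ ≤ 2 * z * (2 * LL) := mul_le_mul_of_nonneg_right hcard (by positivity)
  -- big part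
  have h1δ : (0:ℝ) < 1 - δ := by linarith
  have hbig : (∑ p ∈ Pb, Real.log ((A p).divisors.card)) * LL
      ≤ Real.log 2 / (2 * (1 - δ)) * L := by
    rw [Finset.sum_mul]
    have hterm : ∀ p ∈ Pb, Real.log ((A p).divisors.card) * LL
        ≤ Real.log 2 / (2 * (1 - δ)) * ((A p : ℝ) * Real.log p) := by
      intro p hp
      obtain ⟨hpP, hpz⟩ := Finset.mem_filter.mp hp
      push_neg at hpz
      have hlogp : (1 - δ) * LL ≤ Real.log p := by
        have h5 : Real.log z ≤ Real.log p := Real.log_le_log hzpos hpz.le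
        rwa [hz, Real.log_exp] at h5
      have h1 : Real.log ((A p).divisors.card) ≤ (A p : ℝ) / 2 * Real.log 2 :=
        log_card_divisors_le_half _
      calc Real.log ((A p).divisors.card) * LL
          ≤ ((A p : ℝ) / 2 * Real.log 2) * LL := by
            apply mul_le_mul_of_nonneg_right _ hLLpos.le
            exact h1
      _ ≤ ((A p : ℝ) / 2 * Real.log 2) * (Real.log p / (1 - δ)) := by
            apply mul_le_mul_of_nonneg_left _ (by positivity)
            rw [le_div_iff₀ h1δ]
            nlinarith
      _ = Real.log 2 / (2 * (1 - δ)) * ((A p : ℝ) * Real.log p) := by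
            field_simp
    calc ∑ p ∈ Pb, Real.log ((A p).divisors.card) * LL
        ≤ ∑ p ∈ Pb, Real.log 2 / (2 * (1 - δ)) * ((A p : ℝ) * Real.log p) :=
          Finset.sum_le_sum hterm
    _ = Real.log 2 / (2 * (1 - δ)) * ∑ p ∈ Pb, (A p : ℝ) * Real.log p := by
          rw [Finset.mul_sum]
    _ ≤ Real.log 2 / (2 * (1 - δ)) * L := by
          apply mul_le_mul_of_nonneg_left _ (by positivity)
          rw [hLsum]
          apply Finset.sum_le_sum_of_subset_of_nonneg (Finset.filter_subset _ _)
          intro p hp _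
          exact htermnn p hp
  -- constant bound
  have hconst : Real.log 2 / (2 * (1 - δ)) ≤ 1/2 * Real.log 2 + ε/2 := by
    have h2 : 1 / (1 - δ) ≤ 1 + 2 * δ := by
      rw [div_le_iff₀ h1δ]
      nlinarith
    have h3 : Real.log 2 / (2 * (1 - δ)) = Real.log 2 / 2 * (1 / (1 - δ)) := by
      field_simp
    have h4 : δ * (2 * Real.log 2) ≤ ε := by
      rw [← le_div_iff₀ (by positivity)]
      exact hδε
    calc Real.log 2 / (2 * (1 - δ)) = Real.log 2 / 2 * (1 / (1 - δ)) := h3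
    _ ≤ Real.log 2 / 2 * (1 + 2 * δ) := by
        apply mul_le_mul_of_nonneg_left h2 (by positivity)
    _ = Real.log 2 / 2 + δ * Real.log 2 := by ring
    _ ≤ 1/2 * Real.log 2 + ε/2 := by linarith
  -- assemble
  have hsmLL : (∑ p ∈ Ps, Real.log ((A p).divisors.card)) * LL ≤ ε/2 * L := by
    have h6 : (∑ p ∈ Ps, Real.log ((A p).divisors.card)) * LL ≤ (2 * z * (2 * LL)) * LL :=
      mul_le_mul_of_nonneg_right hsmall hLLpos.le
    have h7 : (2 * z * (2 * LL)) * LL = 4 * z * LL ^ 2 := by ring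
    have h8 : 4 * z * LL ^ 2 ≤ ε / 2 * L := hC3
    linarith
  have hmain : Real.log (tauEStar n) * LL ≤ (1/2 * Real.log 2 + ε) * L := by
    have ht := mul_le_mul_of_nonneg_right hlogsum hLLpos.le
    rw [add_mul] at ht
    have hconst' : Real.log 2 / (2 * (1 - δ)) * L ≤ (1/2 * Real.log 2 + ε/2) * L :=
      mul_le_mul_of_nonneg_right hconst hLpos.le
    nlinarith [hsmLL, hbig, hconst']
  rw [div_le_iff₀ hLpos]
  exact hmain

end Upper


noncomputable def thetaB (y : ℕ) : ℝ := ∑ p ∈ y.primesBelow, Real.log p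

lemma log_nat_le_log_nat' {a b : ℕ} (h : a ≤ b) : Real.log a ≤ Real.log b := by
  rcases Nat.eq_zero_or_pos a with h0 | h0
  · rw [h0]; simpa using Real.log_natCast_nonneg b
  · exact Real.log_le_log (by exact_mod_cast h0) (by exact_mod_cast h)

lemma chebyshev_key (n : ℕ) (hn : 4 ≤ n) :
    (n : ℝ) * Real.log 4 ≤ (((2 * n + 1).primesBelow.card : ℝ) + 1) * Real.log (2 * n) := by
  have h2n : 0 < 2 * n := by omega
  -- centralBinom n ≤ (2n) ^ π(2n+1)
  have hsub : (Nat.centralBinom n).primeFactors ⊆ (2 * n + 1).primesBelow := by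
    intro p hp
    have hprime := Nat.prime_of_mem_primeFactors hp
    have hν : 1 ≤ (Nat.centralBinom n).factorization p := by
      have := Nat.support_factorization (Nat.centralBinom n) ▸ hp
      have := Finsupp.mem_support_iff.mp this
      omega
    have hple : p ≤ 2 * n := by
      calc p = p ^ 1 := (pow_one p).symm
      _ ≤ p ^ ((Nat.centralBinom n).factorization p) :=
          Nat.pow_le_pow_right hprime.pos hν
      _ ≤ 2 * n := Nat.pow_factorization_choose_le h2n
    exact Nat.mem_primesBelow.mpr ⟨by omega, hprime⟩
  have hcb : Nat.centralBinom n ≤ (2 * n) ^ ((2 * n + 1).primesBelow.card) := by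
    conv_lhs => rw [← Nat.factorization_prod_pow_eq_self (Nat.centralBinom_ne_zero n)]
    rw [Finsupp.prod, Nat.support_factorization]
    calc ∏ p ∈ (Nat.centralBinom n).primeFactors, p ^ ((Nat.centralBinom n).factorization p)
        ≤ ∏ _p ∈ (Nat.centralBinom n).primeFactors, (2 * n) := by
          apply Finset.prod_le_prod'
          intro p _
          exact Nat.pow_factorization_choose_le h2n
    _ = (2 * n) ^ ((Nat.centralBinom n).primeFactors.card) := by
          rw [Finset.prod_const]
    _ ≤ (2 * n) ^ ((2 * n + 1).primesBelow.card) :=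
          Nat.pow_le_pow_right h2n (Finset.card_le_card hsub)
  have hfour : 4 ^ n ≤ (2 * n) ^ ((2 * n + 1).primesBelow.card + 1) := by
    have h1 : 4 ^ n < n * Nat.centralBinom n := Nat.four_pow_lt_mul_centralBinom n hn
    calc 4 ^ n ≤ n * Nat.centralBinom n := h1.le
    _ ≤ (2 * n) * (2 * n) ^ ((2 * n + 1).primesBelow.card) := by
        apply Nat.mul_le_mul (by omega) hcb
    _ = (2 * n) ^ ((2 * n + 1).primesBelow.card + 1) := by ring
  have := log_nat_le_log_nat' hfour
  rw [Nat.cast_pow, Nat.cast_pow, Real.log_pow, Real.log_pow] at this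
  push_cast at this ⊢
  linarith

lemma primesBelow_mono {a b : ℕ} (h : a ≤ b) : a.primesBelow ⊆ b.primesBelow := by
  intro p hp
  rw [Nat.mem_primesBelow] at hp ⊢
  exact ⟨lt_of_lt_of_le hp.1 h, hp.2⟩

lemma log_four : Real.log 4 = 2 * Real.log 2 := by
  rw [show (4:ℝ) = 2^2 by norm_num, Real.log_pow]
  push_cast
  ring

lemma pi_lower : ∀ᶠ y : ℕ in atTop,
    (y : ℝ) / (4 * Real.log y) ≤ (y.primesBelow.card : ℝ) := by
  have hl2 : (0.6931471803 : ℝ) < Real.log 2 := Real.log_two_gt_d9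
  have hc : (0:ℝ) < (Real.log 2 - 1/4)/2 := by linarith
  have hev : ∀ᶠ x : ℝ in atTop, x/4 + Real.log x + 2*Real.log 2 ≤ x * Real.log 2 := by
    have h := Real.isLittleO_log_id_atTop.def hc
    filter_upwards [h, eventually_ge_atTop (2*Real.log 2/((Real.log 2 - 1/4)/2)),
      eventually_ge_atTop 1] with x hx hx2 hx1
    simp only [Real.norm_eq_abs, id_eq] at hx
    rw [abs_of_nonneg (Real.log_nonneg hx1), abs_of_nonneg (by linarith : (0:ℝ) ≤ x)] at hx
    have h2 : 2*Real.log 2 ≤ (Real.log 2 - 1/4)/2 * x := by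
      rw [div_le_iff₀ hc] at hx2
      linarith
    nlinarith
  filter_upwards [tendsto_natCast_atTop_atTop.eventually hev, eventually_ge_atTop 9]
    with y hx hy9
  set n := (y-1)/2 with hn
  have hn4 : 4 ≤ n := by omega
  have h2n1 : 2*n+1 ≤ y := by omega
  have h2ny : 2*n ≤ y := by omega
  have hyn : y ≤ 2*n + 2 := by omega
  have hkey := chebyshev_key n hn4
  have hmono : ((2*n+1).primesBelow.card : ℝ) ≤ (y.primesBelow.card : ℝ) := by
    exact_mod_cast Finset.card_le_card (primesBelow_mono h2n1)
  have hnpos : (0:ℝ) < 2*(n:ℝ) := by positivity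
  have hn1 : (1:ℝ) ≤ (n:ℝ) := by exact_mod_cast (by omega : 1 ≤ n)
  have hlog2n_nonneg : 0 ≤ Real.log (2*(n:ℝ)) := Real.log_nonneg (by linarith)
  have hlog2n : Real.log (2*(n:ℝ)) ≤ Real.log y := by
    apply Real.log_le_log hnpos
    exact_mod_cast h2ny
  have hlogy_pos : (0:ℝ) < Real.log y :=
    Real.log_pos (by exact_mod_cast (by omega : 1 < y))
  -- chain
  have hch : ((y.primesBelow.card : ℝ) + 1) * Real.log y ≥ (n:ℝ) * Real.log 4 := by
    calc ((y.primesBelow.card : ℝ) + 1) * Real.log y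
        ≥ (((2*n+1).primesBelow.card : ℝ) + 1) * Real.log y := by
          apply mul_le_mul_of_nonneg_right (by linarith) hlogy_pos.le
    _ ≥ (((2*n+1).primesBelow.card : ℝ) + 1) * Real.log (2*(n:ℝ)) := by
          apply mul_le_mul_of_nonneg_left hlog2n (by positivity)
    _ ≥ (n:ℝ) * Real.log 4 := hkey
  rw [log_four] at hch
  have hyn' : (y:ℝ) - 2 ≤ 2*(n:ℝ) := by
    have : (y:ℝ) ≤ 2*(n:ℝ) + 2 := by exact_mod_cast hyn
    linarith
  have h3 : ((y.primesBelow.card : ℝ) + 1) * Real.log y ≥ ((y:ℝ) - 2) * Real.log 2 := by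
    nlinarith
  rw [div_le_iff₀ (by positivity : (0:ℝ) < 4 * Real.log y)]
  nlinarith [hx]

lemma theta_le (y : ℕ) : thetaB y ≤ (y.primesBelow.card : ℝ) * Real.log y := by
  rw [thetaB]
  calc ∑ p ∈ y.primesBelow, Real.log p
      ≤ y.primesBelow.card • Real.log y := by
        apply Finset.sum_le_card_nsmul
        intro p hp
        exact log_nat_le_log_nat' (Nat.lt_of_mem_primesBelow hp).le
  _ = (y.primesBelow.card : ℝ) * Real.log y := nsmul_eq_mul _ _

lemma theta_nonneg (y : ℕ) : 0 ≤ thetaB y :=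
  Finset.sum_nonneg fun p _ => Real.log_natCast_nonneg p

lemma theta_lower : ∀ᶠ y : ℕ in atTop, (y : ℝ) / 16 ≤ thetaB y := by
  have hev : ∀ᶠ x : ℝ in atTop, Real.log x ≤ 1/32 * Real.sqrt x := by
    have h := (isLittleO_log_rpow_atTop (by norm_num : (0:ℝ) < 1/2)).def
      (by norm_num : (0:ℝ) < 1/32)
    filter_upwards [h, eventually_ge_atTop 1] with x hx hx1
    have hx0 : (0:ℝ) ≤ x := by linarith
    simp only [Real.norm_eq_abs] at hx
    rw [abs_of_nonneg (Real.log_nonneg hx1),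
      abs_of_nonneg (Real.rpow_nonneg hx0 _)] at hx
    rwa [Real.sqrt_eq_rpow]
  filter_upwards [pi_lower, tendsto_natCast_atTop_atTop.eventually hev,
    eventually_ge_atTop 9] with y hpi hlog hy9
  set s := Nat.sqrt y + 1 with hs
  have hsy : s ≤ y := by
    have := Nat.sqrt_lt_self (by omega : 1 < y)
    omega
  have hylt : y < s * s := Nat.lt_succ_sqrt y
  have hy1 : (1:ℝ) ≤ (y:ℝ) := by exact_mod_cast (by omega : 1 ≤ y)
  have hsqrt_le : ((Nat.sqrt y : ℕ) : ℝ) ≤ Real.sqrt y := by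
    rw [Real.le_sqrt (Nat.cast_nonneg _) (Nat.cast_nonneg _)]
    exact_mod_cast Nat.sqrt_le' y
  have hsqrt1 : (1:ℝ) ≤ Real.sqrt y := by
    rw [Real.le_sqrt (by norm_num) (Nat.cast_nonneg _)]
    linarith
  have hsle : (s:ℝ) ≤ 2 * Real.sqrt y := by
    rw [hs]
    push_cast
    linarith
  have hlogy_pos : (0:ℝ) < Real.log y :=
    Real.log_pos (by exact_mod_cast (by omega : 1 < y))
  -- log s ≥ (1/2) log y
  have hlogs : Real.log y ≤ 2 * Real.log s := by
    have h1 : Real.log y ≤ Real.log ((s*s : ℕ)) := log_nat_le_log_nat' hylt.le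
    rwa [Nat.cast_mul, Real.log_mul (by positivity) (by positivity), ← two_mul] at h1
  -- theta ≥ (pi y - s) * (1/2) log y
  set D := y.primesBelow \ s.primesBelow with hD
  have h1 : (y.primesBelow.card : ℝ) - (s:ℝ) ≤ (D.card : ℝ) := by
    have ha : y.primesBelow.card ≤ D.card + s.primesBelow.card :=
      Finset.card_le_card_sdiff_add_card
    have hb : s.primesBelow.card ≤ s := by
      calc s.primesBelow.card ≤ (Finset.range s).card :=
            Finset.card_le_card (Finset.filter_subset _ _)
      _ = s := Finset.card_range s
    have : y.primesBelow.card ≤ D.card + s := by omega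
    have hr : (y.primesBelow.card : ℝ) ≤ (D.card : ℝ) + (s : ℝ) := by exact_mod_cast this
    linarith
  have h2 : (D.card : ℝ) * (1/2 * Real.log y) ≤ thetaB y := by
    calc (D.card : ℝ) * (1/2 * Real.log y) ≤ (D.card : ℝ) * Real.log s := by
          apply mul_le_mul_of_nonneg_left (by linarith) (Nat.cast_nonneg _)
    _ ≤ ∑ p ∈ D, Real.log p := by
          rw [← nsmul_eq_mul]
          apply Finset.card_nsmul_le_sum
          intro p hp
          rw [hD, Finset.mem_sdiff] at hp
          apply log_nat_le_log_nat'
          by_contra hlt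
          push_neg at hlt
          exact hp.2 (Nat.mem_primesBelow.mpr ⟨hlt, Nat.prime_of_mem_primesBelow hp.1⟩)
    _ ≤ thetaB y := by
          apply Finset.sum_le_sum_of_subset_of_nonneg (Finset.sdiff_subset)
          intro p _ _
          exact Real.log_natCast_nonneg p
  -- combine
  have h3 : ((y:ℝ) / (4 * Real.log y) - 2 * Real.sqrt y) * (1/2 * Real.log y) ≤ thetaB y := by
    calc ((y:ℝ) / (4 * Real.log y) - 2 * Real.sqrt y) * (1/2 * Real.log y)
        ≤ ((y.primesBelow.card : ℝ) - (s:ℝ)) * (1/2 * Real.log y) := by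
          apply mul_le_mul_of_nonneg_right _ (by positivity)
          have := hpi
          linarith
    _ ≤ (D.card : ℝ) * (1/2 * Real.log y) := by
          apply mul_le_mul_of_nonneg_right h1 (by positivity)
    _ ≤ thetaB y := h2
  have h4 : ((y:ℝ) / (4 * Real.log y) - 2 * Real.sqrt y) * (1/2 * Real.log y)
      = (y:ℝ)/8 - Real.sqrt y * Real.log y := by
    field_simp
    ring
  have h5 : Real.sqrt y * Real.log y ≤ (y:ℝ)/16 := by
    have h6 : Real.log (y:ℝ) ≤ 1/32 * Real.sqrt y := hlog
    have h7 : Real.sqrt y * Real.log y ≤ Real.sqrt y * (1/32 * Real.sqrt y) := by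
      apply mul_le_mul_of_nonneg_left h6 (Real.sqrt_nonneg _)
    have h8 : Real.sqrt y * Real.sqrt y = (y:ℝ) := Real.mul_self_sqrt (by positivity)
    nlinarith [Real.sqrt_nonneg (y:ℝ)]
  rw [h4] at h3
  linarith


lemma tau_lower (y : ℕ) :
    2 ^ y.primesBelow.card ≤ tauEStar ((∏ p ∈ y.primesBelow, p) ^ 2) := by
  set P := y.primesBelow with hP
  have hPprime : ∀ p ∈ P, p.Prime := fun p hp => Nat.prime_of_mem_primesBelow hp
  set M := ∏ p ∈ P, p with hM
  have hM0 : M ≠ 0 := Finset.prod_ne_zero_iff.mpr (fun p hp => (hPprime p hp).pos.ne')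
  have hMpf : M.primeFactors = P := Nat.primeFactors_prod hPprime
  have hMfact : ∀ q ∈ P, M.factorization q = 1 := by
    intro q hq
    rw [hM, Nat.factorization_prod (fun p hp => (hPprime p hp).pos.ne')]
    rw [Finset.sum_apply']
    rw [Finset.sum_eq_single q]
    · rw [(hPprime q hq).factorization]
      simp
    · intro p hp hne
      rw [(hPprime p hp).factorization, Finsupp.single_apply]
      simp [hne]
    · intro h
      exact absurd hq h
  have hn0 : (M ^ 2) ≠ 0 := pow_ne_zero _ hM0
  have hnpf : (M ^ 2).primeFactors = P := by
    rw [Nat.primeFactors_pow M (by norm_num), hMpf]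
  have hnfact : ∀ q ∈ P, (M ^ 2).factorization q = 2 := by
    intro q hq
    rw [Nat.factorization_pow]
    simp [hMfact q hq]
  have hdiv : M.divisors.card = 2 ^ P.card := by
    rw [Nat.card_divisors hM0, hMpf]
    rw [Finset.prod_congr rfl (fun q hq => by rw [hMfact q hq] : ∀ q ∈ P, M.factorization q + 1 = 2)]
    simp
  rw [← hdiv, tauEStar]
  apply Finset.card_le_card_of_injOn (fun e => M * e)
  · intro e he
    rw [Finset.mem_coe, Nat.mem_divisors] at he
    obtain ⟨hedvd, -⟩ := he
    have he0 : e ≠ 0 := ne_zero_of_dvd_ne_zero hM0 hedvd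
    rw [Finset.mem_coe, Finset.mem_filter, Nat.mem_divisors]
    have hepf : e.primeFactors ⊆ P := by
      have := Nat.primeFactors_mono hedvd hM0
      rwa [hMpf] at this
    refine ⟨⟨by rw [sq]; exact mul_dvd_mul_left M hedvd, hn0⟩,
      Nat.pos_of_ne_zero (mul_ne_zero hM0 he0), Nat.pos_of_ne_zero hn0, ?_, ?_⟩
    · rw [Nat.primeFactors_mul hM0 he0, hMpf, hnpf]
      exact Finset.union_eq_left.mpr hepf
    · intro q hq
      rw [hnpf] at hq
      rw [Nat.factorization_mul hM0 he0]
      simp only [Finsupp.coe_add, Pi.add_apply]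
      rw [hMfact q hq, hnfact q hq]
      have hle : e.factorization q ≤ 1 := by
        have h1 := (Nat.factorization_le_iff_dvd he0 hM0).mpr hedvd
        have h2 : e.factorization q ≤ M.factorization q := h1 q
        rwa [hMfact q hq] at h2
      rcases Nat.le_one_iff_eq_zero_or_eq_one.mp hle with h | h <;> rw [h]
      · exact ⟨one_dvd 2, by decide⟩
      · exact ⟨dvd_refl 2, by decide⟩
  · intro e1 h1 e2 h2 heq
    exact mul_left_cancel₀ hM0 heq


lemma lower_freq (ε : ℝ) (hε : 0 < ε) :
    ∃ᶠ n : ℕ in atTop,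
      1/2 * Real.log 2 - ε ≤
        Real.log (tauEStar n) * Real.log (Real.log n) / Real.log n := by
  rw [frequently_atTop]
  intro N
  have hev : ∀ᶠ y : ℕ in atTop,
      ((y:ℝ)/16 ≤ thetaB y) ∧ (16 ≤ y) ∧
        (Real.log 2 * Real.log 8 ≤ 2 * ε * Real.log y) := by
    refine theta_lower.and ((eventually_ge_atTop 16).and ?_)
    have h1 : Tendsto (fun y : ℕ => Real.log y) atTop atTop :=
      Real.tendsto_log_atTop.comp tendsto_natCast_atTop_atTop
    have h2 := h1.eventually_ge_atTop (Real.log 2 * Real.log 8 / (2 * ε))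
    filter_upwards [h2] with y hy
    rw [div_le_iff₀ (by positivity : (0:ℝ) < 2*ε)] at hy
    linarith
  obtain ⟨y₀, hy₀⟩ := eventually_atTop.mp hev
  obtain ⟨p, hpge, hpprime⟩ := Nat.exists_infinite_primes (max N y₀)
  have hpN : N ≤ p := le_trans (le_max_left _ _) hpge
  have hpy₀ : y₀ ≤ p := le_trans (le_max_right _ _) hpge
  set y := p + 1 with hy
  obtain ⟨hθlow, hy16, hεcond⟩ := hy₀ y (by omega)
  set M := ∏ q ∈ y.primesBelow, q with hM
  set n := M ^ 2 with hn
  have hM0 : M ≠ 0 := Finset.prod_ne_zero_iff.mpr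
    (fun q hq => (Nat.prime_of_mem_primesBelow hq).pos.ne')
  refine ⟨n, ?_, ?_⟩
  · -- n ≥ N
    have hpmem : p ∈ y.primesBelow := Nat.mem_primesBelow.mpr ⟨by omega, hpprime⟩
    have hMp : p ≤ M := Finset.single_le_prod' (fun q hq =>
      (Nat.prime_of_mem_primesBelow hq).one_lt.le.trans' (by norm_num)) hpmem
    have : M ≤ n := by
      rw [hn, sq]
      exact Nat.le_mul_of_pos_left M (Nat.pos_of_ne_zero hM0)
    omega
  · -- the estimate
    set π : ℝ := (y.primesBelow.card : ℝ) with hπ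
    set θ := thetaB y with hθ
    have hy2 : (2:ℕ) ∈ y.primesBelow := Nat.mem_primesBelow.mpr ⟨by omega, Nat.prime_two⟩
    have hπ1 : (1:ℝ) ≤ π := by
      rw [hπ]
      exact_mod_cast Finset.card_pos.mpr ⟨2, hy2⟩
    have hπpos : (0:ℝ) < π := by linarith
    have hyR : (16:ℝ) ≤ (y:ℝ) := by exact_mod_cast hy16
    have hθpos : (0:ℝ) < θ := by
      rw [hθ]; linarith [hθlow]
    have hlogM : Real.log M = θ := by
      rw [hM, hθ, thetaB, Nat.cast_prod]
      exact Real.log_prod (fun q hq => by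
        exact_mod_cast (Nat.prime_of_mem_primesBelow hq).pos.ne')
    have hL : Real.log (n:ℝ) = 2 * θ := by
      rw [hn]
      push_cast
      rw [Real.log_pow, hlogM]
      push_cast
      ring
    have hlogτ : π * Real.log 2 ≤ Real.log (tauEStar n) := by
      have h1 := log_nat_le_log_nat' (tau_lower y)
      rw [Nat.cast_pow, Real.log_pow] at h1
      push_cast at h1
      exact h1
    have hlogy_pos : (0:ℝ) < Real.log y :=
      Real.log_pos (by exact_mod_cast (by omega : 1 < y))
    have h2θ : (y:ℝ)/8 ≤ 2*θ := by
      rw [hθ]; linarith [hθlow]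
    have hLLpos : (0:ℝ) ≤ Real.log (2*θ) := Real.log_nonneg (by linarith)
    have hτnn : (0:ℝ) ≤ Real.log (tauEStar n) := Real.log_natCast_nonneg _
    have hθle : θ ≤ π * Real.log y := theta_le y
    -- chain
    rw [hL]
    have step1 : π * Real.log 2 * Real.log (2*θ) / (2*θ)
        ≤ Real.log (tauEStar n) * Real.log (2*θ) / (2*θ) := by
      apply div_le_div_of_nonneg_right ?_ (by linarith)
      exact mul_le_mul_of_nonneg_right hlogτ hLLpos
    have step2 : π * Real.log 2 * Real.log (2*θ) / (2 * (π * Real.log y))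
        ≤ π * Real.log 2 * Real.log (2*θ) / (2*θ) := by
      apply div_le_div_of_nonneg_left ?_ (by linarith) ?_
      · positivity
      · linarith
    have step3 : π * Real.log 2 * Real.log (2*θ) / (2 * (π * Real.log y))
        = Real.log 2 * Real.log (2*θ) / (2 * Real.log y) := by
      field_simp
    have step4 : Real.log 2 * (Real.log y - Real.log 8) / (2 * Real.log y)
        ≤ Real.log 2 * Real.log (2*θ) / (2 * Real.log y) := by
      apply div_le_div_of_nonneg_right ?_ (by positivity)
      apply mul_le_mul_of_nonneg_left ?_ (Real.log_nonneg one_le_two)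
      have h8 : Real.log ((y:ℝ)/8) ≤ Real.log (2*θ) :=
        Real.log_le_log (by linarith) h2θ
      rwa [Real.log_div (by linarith) (by norm_num)] at h8
    have step5 : 1/2 * Real.log 2 - ε
        ≤ Real.log 2 * (Real.log y - Real.log 8) / (2 * Real.log y) := by
      have hexp : Real.log 2 * (Real.log y - Real.log 8) / (2 * Real.log y)
          = 1/2 * Real.log 2 - Real.log 2 * Real.log 8 / (2 * Real.log y) := by
        field_simp
      rw [hexp]
      have : Real.log 2 * Real.log 8 / (2 * Real.log y) ≤ ε := by
        rw [div_le_iff₀ (by positivity)]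
        nlinarith
      linarith
    linarith [step1, step2, step4, step3 ▸ step2]


end AuxProof

/-- The maximal order of `τ^{(e)*}`:
`limsup (log τ^{(e)*}(n) · log log n) / log n = (1/2) log 2`. -/
theorem tauEStar_limsup :
    Filter.limsup
      (fun n : ℕ => Real.log (tauEStar n) * Real.log (Real.log n) / Real.log n)
      Filter.atTop = 1 / 2 * Real.log 2 := by
  apply limsup_eq_of_aux
  · intro ε hε
    exact upper_bound ε hε
  · intro ε hε
    exact lower_freq ε hε
end

section
/- Let n = p_1^{a_1} ··· p_r^{a_r} > 1 with distinct primes p_i. The number of unitary e-divisors of n (divisors d of n such that d and n/d are exponentially coprime) equals φ(a_1) ··· φ(a_r) if n is squarefull (all a_i ≥ 2), and equals 0 if n is not squarefull, where φ is Euler's totient function. -/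
open scoped Classical BigOperators

/-- `d` is a unitary e-divisor of `n`: `d ∣ n`, and `d` and `n/d` are exponentially
coprime, i.e. `d` and `n/d` have the same prime factors as `n` and at each prime the
exponents `b`, `a - b` of `d`, `n/d` satisfy `gcd (b, a - b) = 1`. -/
def IsUnitaryExpDivisor (d n : ℕ) : Prop :=
  d ∣ n ∧ d.primeFactors = n.primeFactors ∧ (n / d).primeFactors = n.primeFactors ∧
    ∀ p ∈ n.primeFactors,
      Nat.gcd (d.factorization p) (n.factorization p - d.factorization p) = 1

lemma fact_prod_pow {s : Finset ℕ} (hs : ∀ p ∈ s, p.Prime) (g : ℕ → ℕ) (q : ℕ) :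
    (∏ p ∈ s, p ^ g p).factorization q = if q ∈ s then g q else 0 := by
  rw [Nat.factorization_prod (fun p hp => pow_ne_zero _ (hs p hp).pos.ne')]
  rw [Finset.sum_apply']
  have : ∀ p ∈ s, (p ^ g p).factorization q = if p = q then g p else 0 := by
    intro p hp
    rw [(hs p hp).factorization_pow, Finsupp.single_apply]
  rw [Finset.sum_congr rfl this, Finset.sum_ite_eq']

lemma count_coprime (a : ℕ) :
    ((Finset.Ico 1 a).filter (fun b => Nat.gcd b a = 1)).card =
      if 2 ≤ a then Nat.totient a else 0 := by
  rcases lt_or_ge a 2 with h | h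
  · rw [if_neg (by omega)]
    interval_cases a <;> simp
  · rw [if_pos h, Nat.totient_eq_card_coprime]
    congr 1
    ext b
    simp only [Finset.mem_filter, Finset.mem_Ico, Finset.mem_range]
    constructor
    · rintro ⟨⟨h1, h2⟩, h3⟩
      exact ⟨h2, by rwa [Nat.Coprime, Nat.gcd_comm]⟩
    · rintro ⟨h1, h2⟩
      rw [Nat.Coprime, Nat.gcd_comm] at h2
      refine ⟨⟨?_, h1⟩, h2⟩
      rcases Nat.eq_zero_or_pos b with rfl | hb
      · simp [Nat.gcd_zero_left] at h2; omega
      · exact hb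

/-- The number of unitary e-divisors of `n > 1` is `φ(a_1) ⋯ φ(a_r)` if `n` is
squarefull, and `0` otherwise. -/
theorem card_unitary_exp_divisors :
    ∀ n : ℕ, 1 < n →
      (n.divisors.filter (fun d => IsUnitaryExpDivisor d n)).card =
        if ∀ p ∈ n.primeFactors, 2 ≤ n.factorization p
        then ∏ p ∈ n.primeFactors, Nat.totient (n.factorization p)
        else 0 := by
  intro n hn
  have hn0 : n ≠ 0 := by omega
  set s := n.primeFactors with hs
  have hsp : ∀ p ∈ s, p.Prime := fun p hp => Nat.prime_of_mem_primeFactors hp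
  set t := fun p => (Finset.Ico 1 (n.factorization p)).filter
      (fun b => Nat.gcd b (n.factorization p) = 1) with ht
  have key : (n.divisors.filter (fun d => IsUnitaryExpDivisor d n)).card
      = (s.pi (fun p => t p)).card := by
    refine Finset.card_bij' (fun d _ => fun p _ => d.factorization p)
      (fun f _ => ∏ p ∈ s, p ^ (if h : p ∈ s then f p h else 0)) ?_ ?_ ?_ ?_
    · -- forward membership
      intro d hd
      rw [Finset.mem_filter] at hd
      obtain ⟨hdvd, hdp, hqp, hg⟩ := hd.2
      rw [Finset.mem_pi]
      intro p hp
      have hb1 : 1 ≤ d.factorization p := by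
        have hmem : p ∈ d.primeFactors := by rw [hdp]; exact hp
        rw [← Nat.support_factorization, Finsupp.mem_support_iff] at hmem
        omega
      have hblt : d.factorization p < n.factorization p := by
        have hmem : p ∈ (n / d).primeFactors := by rw [hqp]; exact hp
        rw [← Nat.support_factorization, Finsupp.mem_support_iff,
          Nat.factorization_div hdvd, Finsupp.tsub_apply] at hmem
        omega
      rw [ht, Finset.mem_filter, Finset.mem_Ico]
      refine ⟨⟨hb1, hblt⟩, ?_⟩
      have hgp := hg p hp
      rw [← Nat.sub_add_cancel hblt.le, Nat.gcd_add_self_right]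
      exact hgp
    · -- backward membership
      intro f hf
      rw [Finset.mem_pi] at hf
      set g : ℕ → ℕ := fun p => if h : p ∈ s then f p h else 0 with hgdef
      have hfact : ∀ q, (∏ p ∈ s, p ^ g p).factorization q = if q ∈ s then g q else 0 :=
        fact_prod_pow hsp g
      have hd0 : (∏ p ∈ s, p ^ g p) ≠ 0 :=
        Finset.prod_ne_zero_iff.mpr fun p hp => pow_ne_zero _ (hsp p hp).pos.ne'
      have hgball : ∀ p ∈ s, 1 ≤ g p ∧ g p < n.factorization p ∧
          Nat.gcd (g p) (n.factorization p) = 1 := by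
        intro p hp
        have hfp := hf p hp
        rw [ht, Finset.mem_filter, Finset.mem_Ico] at hfp
        rw [hgdef]
        simp only [dif_pos hp]
        exact ⟨hfp.1.1, hfp.1.2, hfp.2⟩
      have hdvd : (∏ p ∈ s, p ^ g p) ∣ n := by
        rw [← Nat.factorization_le_iff_dvd hd0 hn0, Finsupp.le_def]
        intro q
        rw [hfact q]
        by_cases hq : q ∈ s
        · rw [if_pos hq]; exact (hgball q hq).2.1.le
        · simp [hq]
      have hdp : (∏ p ∈ s, p ^ g p).primeFactors = s := by
        ext q
        rw [← Nat.support_factorization, Finsupp.mem_support_iff, hfact q]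
        by_cases hq : q ∈ s
        · simp only [if_pos hq]
          have h1 := (hgball q hq).1
          exact ⟨fun _ => hq, fun _ => by omega⟩
        · simp [hq]
      have hqp : (n / ∏ p ∈ s, p ^ g p).primeFactors = s := by
        ext q
        rw [← Nat.support_factorization, Finsupp.mem_support_iff,
          Nat.factorization_div hdvd, Finsupp.tsub_apply, hfact q]
        by_cases hq : q ∈ s
        · simp only [if_pos hq]
          have h1 := (hgball q hq).2.1
          exact ⟨fun _ => hq, fun _ => by omega⟩
        · have hnq : n.factorization q = 0 := by
            rw [← Finsupp.notMem_support_iff, Nat.support_factorization]; exact hq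
          simp [hq, hnq]
      rw [Finset.mem_filter, Nat.mem_divisors]
      refine ⟨⟨hdvd, hn0⟩, hdvd, hdp, hqp, ?_⟩
      intro p hp
      rw [hfact p, if_pos hp]
      obtain ⟨h1, h2, h3⟩ := hgball p hp
      rw [← Nat.sub_add_cancel h2.le, Nat.gcd_add_self_right] at h3
      exact h3
    · -- left inverse
      intro d hd
      rw [Finset.mem_filter] at hd
      have hd0 : d ≠ 0 := (Nat.pos_of_mem_divisors hd.1).ne'
      have hdp : d.primeFactors = s := hd.2.2.1
      show (∏ p ∈ s, p ^ (if h : p ∈ s then d.factorization p else 0)) = d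
      conv_rhs => rw [← Nat.factorization_prod_pow_eq_self hd0]
      rw [Finsupp.prod, Nat.support_factorization, hdp]
      exact Finset.prod_congr rfl fun p hp => by rw [dif_pos hp]
    · -- right inverse
      intro f hf
      funext p hp
      show (∏ q ∈ s, q ^ (if h : q ∈ s then f q h else 0)).factorization p = f p hp
      rw [fact_prod_pow hsp (fun q => if h : q ∈ s then f q h else 0) p, if_pos hp, dif_pos hp]
  rw [key, Finset.card_pi]
  have hcard : ∀ p ∈ s, (t p).card =
      if 2 ≤ n.factorization p then Nat.totient (n.factorization p) else 0 :=
    fun p _ => count_coprime _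
  rw [Finset.prod_congr rfl hcard]
  by_cases hsq : ∀ p ∈ n.primeFactors, 2 ≤ n.factorization p
  · rw [if_pos hsq]
    exact Finset.prod_congr rfl fun p hp => if_pos (hsq p hp)
  · rw [if_neg hsq]
    push_neg at hsq
    obtain ⟨p, hp, h2⟩ := hsq
    exact Finset.prod_eq_zero hp (if_neg (by omega))
end
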